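/- Let 0 < ζ < 1 and β > 0, and define H(γ) = (γ/β)^ζ on [0,∞). Then for any q > 0 and p ∈ ℝ, the function L(γ) = -p²γ/(2(1+qγ)) + (1/2)log(1+qγ) + H(γ) satisfies: there exists ε > 0 such that L(γ) > L(0) for all γ ∈ (0, ε); i.e., γ = 0 is always a strict local minimizer of L on [0,∞). -/
import Mathlib


theorem stmt_15 (ζ β q p : ℝ) (hζ : 0 < ζ) (hζ1 : ζ < 1) (hβ : 0 < β)
    (hq : 0 < q) (H L : ℝ → ℝ)
    (hH : ∀ γ : ℝ, H γ = (γ / β) ^ ζ)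
    (hL : ∀ γ : ℝ, L γ = -(p^2 * γ) / (2 * (1 + q * γ)) + (1/2) * Real.log (1 + q * γ) + H γ) :
    ∃ ε > 0, ∀ γ ∈ Set.Ioo (0:ℝ) ε, L 0 < L γ := by
  have hζ' : (0:ℝ) < 1 - ζ := by linarith
  set C : ℝ := p ^ 2 / 2 + 1 with hC
  have hCpos : 0 < C := by positivity
  have hβζ : (0:ℝ) < β ^ ζ := Real.rpow_pos_of_pos hβ ζ
  set A : ℝ := (C * β ^ ζ)⁻¹ with hA
  have hApos : 0 < A := by positivity
  refine ⟨A ^ ((1 - ζ)⁻¹), Real.rpow_pos_of_pos hApos _, ?_⟩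
  rintro γ ⟨hγ0, hγε⟩
  have hγζ : 0 < γ ^ ζ := Real.rpow_pos_of_pos hγ0 ζ
  have hL0 : L 0 = 0 := by
    rw [hL, hH]
    simp [Real.zero_rpow hζ.ne']
  have h1 : γ ^ (1 - ζ) < A := by
    calc γ ^ (1 - ζ) < (A ^ ((1 - ζ)⁻¹)) ^ (1 - ζ) :=
          Real.rpow_lt_rpow hγ0.le hγε hζ'
      _ = A := by
          rw [← Real.rpow_mul hApos.le, inv_mul_cancel₀ hζ'.ne', Real.rpow_one]
  have hx : C * β ^ ζ * γ ^ (1 - ζ) < 1 := by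
    have h2 := mul_lt_mul_of_pos_left h1 (by positivity : (0:ℝ) < C * β ^ ζ)
    rwa [mul_inv_cancel₀ (by positivity)] at h2
  have hγsplit : γ ^ (1 - ζ) * γ ^ ζ = γ := by
    rw [← Real.rpow_add hγ0]
    simp
  have h2 : C * γ * β ^ ζ < γ ^ ζ := by
    have h3 := mul_lt_of_lt_one_left hγζ hx
    calc C * γ * β ^ ζ = C * β ^ ζ * (γ ^ (1 - ζ) * γ ^ ζ) := by
          rw [hγsplit]; ring
      _ < γ ^ ζ := by rw [mul_assoc] at h3; linarith [h3]
  have h3 : C * γ < (γ / β) ^ ζ := by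
    rw [Real.div_rpow hγ0.le hβ.le, lt_div_iff₀ hβζ]
    exact h2
  have hden : (0:ℝ) < 1 + q * γ := by nlinarith
  have hlog : 0 ≤ Real.log (1 + q * γ) := Real.log_nonneg (by nlinarith)
  have hfrac : p ^ 2 * γ / (2 * (1 + q * γ)) ≤ p ^ 2 * γ / 2 := by
    gcongr
    nlinarith
  have hCγ : C * γ = p ^ 2 * γ / 2 + γ := by rw [hC]; ring
  rw [hL0, hL γ, hH γ]
  have hneg : -(p ^ 2 * γ) / (2 * (1 + q * γ)) = -(p ^ 2 * γ / (2 * (1 + q * γ))) := by ring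
  rw [hneg]
  linarith
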